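/- (Raabe-type multiplication formula, higher order.) Let m ≥ 1 be an integer and v ≥ 1. For every n ≥ 0 and every real x: Y_{n,β}^{(v)}(mx;k,a,b) = m^{n−kv}·a^{bv(m−1)}·∑ over all tuples (u_1,…,u_{m−1}) of nonnegative integers with u_1+⋯+u_{m−1} ≤ v of (v!/(u_1!⋯u_{m−1}!·(v−u_1−⋯−u_{m−1})!))·(β^b/a^b)^{j}·Ỹ_{n}^{(v)}(x + j/m), where j = u_1 + 2u_2 + ⋯ + (m−1)u_{m−1}, m^{n−kv} := m^n/m^{kv}, and (Ỹ_n^{(v)})_{n≥0} is the family of polynomials attached to the parameters (β^m, a^m), i.e., the polynomials satisfying ((β^b)^m·e^t − (a^b)^m)^v·∑_{n≥0} Ỹ_n^{(v)}(x)·tⁿ/n! = (2^{1−k}·t^k)^v·e^{xt} as formal power series in t. -/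

import Mathlib

open Polynomial

/-- The exponential generating series `e^{xt} = ∑_{n≥0} xⁿ tⁿ/n!` as a formal power series
in `t` with coefficients in `ℂ[x]`. -/
noncomputable def expX : PowerSeries (Polynomial ℂ) :=
  PowerSeries.mk fun n => (n.factorial : ℂ)⁻¹ • (Polynomial.X : Polynomial ℂ) ^ n

/-- The exponential generating series `∑_{n≥0} Y_n tⁿ/n!` of a family of polynomials. -/
noncomputable def egf (Y : ℕ → Polynomial ℂ) : PowerSeries (Polynomial ℂ) :=
  PowerSeries.mk fun n => (n.factorial : ℂ)⁻¹ • Y n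

/-- The defining identity for the unified Apostol-type polynomials with general constants:
`(B·e^t − A)^v · ∑_{n≥0} Y_n tⁿ/n! = (2^{1−k} t^k)^v · e^{xt}` as formal power series in `t`
over `ℂ[x]`. -/
def ApostolFamilyC (k v : ℕ) (B A : ℂ) (Y : ℕ → Polynomial ℂ) : Prop :=
  (PowerSeries.C (R := Polynomial ℂ) (Polynomial.C B) * PowerSeries.exp (Polynomial ℂ)
      - PowerSeries.C (R := Polynomial ℂ) (Polynomial.C A)) ^ v * egf Y
    = (PowerSeries.C (R := Polynomial ℂ) (Polynomial.C ((2 : ℂ) ^ ((1 : ℤ) - (k : ℤ)))) *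
        PowerSeries.X ^ k) ^ v * expX

/-- `Y` is the family of unified Apostol-type polynomials `Y_{n,β}^{(v)}(x;k,a,b)`:
here `β^b = exp(b·Log β)` is the principal complex power and `a^b` the real power. -/
def ApostolFamily (k v : ℕ) (a b : ℝ) (β : ℂ) (Y : ℕ → Polynomial ℂ) : Prop :=
  ApostolFamilyC k v (β ^ (b : ℂ)) (((a ^ b : ℝ) : ℂ)) Y

section Aux

open PowerSeries Finset

lemma mapev_C (p : ℂ) (q : Polynomial ℂ) :
    PowerSeries.map (Polynomial.evalRingHom p) (PowerSeries.C (R := Polynomial ℂ) q)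
      = PowerSeries.C (R := ℂ) (q.eval p) := by
  ext n; simp [PowerSeries.coeff_map, PowerSeries.coeff_C]

lemma mapev_exp (p : ℂ) :
    PowerSeries.map (Polynomial.evalRingHom p) (PowerSeries.exp (Polynomial ℂ))
      = PowerSeries.exp ℂ := by
  ext n
  simp [PowerSeries.coeff_map, PowerSeries.coeff_exp,
    IsScalarTower.algebraMap_apply ℚ ℂ (Polynomial ℂ)]

lemma mapev_egf (p : ℂ) (Z : ℕ → Polynomial ℂ) :
    PowerSeries.map (Polynomial.evalRingHom p) (egf Z)
      = PowerSeries.mk (fun n => (n.factorial : ℂ)⁻¹ * (Z n).eval p) := by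
  ext n; simp [PowerSeries.coeff_map, egf, Polynomial.smul_eval]

lemma mapev_expX (p : ℂ) :
    PowerSeries.map (Polynomial.evalRingHom p) expX = rescale p (PowerSeries.exp ℂ) := by
  ext n
  simp [PowerSeries.coeff_map, expX, coeff_rescale, PowerSeries.coeff_exp,
    Polynomial.smul_eval, mul_comm]

/-- evaluated identity over ℂ -/
lemma eval_family {k v : ℕ} {B A : ℂ} {Z : ℕ → Polynomial ℂ}
    (hZ : ApostolFamilyC k v B A Z) (p : ℂ) :
    (PowerSeries.C (R := ℂ) B * PowerSeries.exp ℂ - PowerSeries.C (R := ℂ) A) ^ v *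
        PowerSeries.mk (fun n => (n.factorial : ℂ)⁻¹ * (Z n).eval p)
      = (PowerSeries.C (R := ℂ) ((2 : ℂ) ^ ((1 : ℤ) - (k : ℤ))) * PowerSeries.X ^ k) ^ v *
        rescale p (PowerSeries.exp ℂ) := by
  have h := congrArg (PowerSeries.map (Polynomial.evalRingHom p)) hZ
  simpa [map_mul, map_pow, map_sub, mapev_C, mapev_exp, mapev_egf, mapev_expX,
    PowerSeries.map_X] using h


noncomputable abbrev E : PowerSeries ℂ := PowerSeries.exp ℂ

lemma exp_pow (j : ℕ) : E ^ j = rescale (j : ℂ) E :=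
  PowerSeries.exp_pow_eq_rescale_exp j

lemma geom_fact (A B : ℂ) (m : ℕ) :
    PowerSeries.C (R := ℂ) (B ^ m) * rescale (m : ℂ) E - PowerSeries.C (R := ℂ) (A ^ m)
      = (PowerSeries.C (R := ℂ) B * E - PowerSeries.C (R := ℂ) A) *
        ∑ j ∈ range m, PowerSeries.C (R := ℂ) (B ^ j * A ^ (m - 1 - j)) * rescale (j : ℂ) E := by
  have h := geom_sum₂_mul (PowerSeries.C (R := ℂ) B * E) (PowerSeries.C (R := ℂ) A) m
  calc PowerSeries.C (R := ℂ) (B ^ m) * rescale (m : ℂ) E - PowerSeries.C (R := ℂ) (A ^ m)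
      = (PowerSeries.C (R := ℂ) B * E) ^ m - (PowerSeries.C (R := ℂ) A) ^ m := by
        rw [mul_pow, map_pow, map_pow, exp_pow]
    _ = _ := by
        rw [← h, mul_comm]
        congr 1
        refine Finset.sum_congr rfl fun j hj => ?_
        rw [map_mul, map_pow, map_pow, ← exp_pow]
        ring

lemma P_pow (A B : ℂ) (m v : ℕ) :
    (∑ j ∈ range m, PowerSeries.C (R := ℂ) (B ^ j * A ^ (m - 1 - j)) * rescale (j : ℂ) E) ^ v
      = ∑ w ∈ piAntidiag (range m) v,
          PowerSeries.C (R := ℂ) ((Nat.multinomial (range m) w : ℂ) *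
            ∏ j ∈ range m, (B ^ j * A ^ (m - 1 - j)) ^ w j) *
          rescale ((∑ j ∈ range m, j * w j : ℕ) : ℂ) E := by
  rw [Finset.sum_pow_eq_sum_piAntidiag]
  refine Finset.sum_congr rfl fun w hw => ?_
  have : ∏ j ∈ range m, (PowerSeries.C (R := ℂ) (B ^ j * A ^ (m - 1 - j)) * rescale (j : ℂ) E) ^ w j
      = PowerSeries.C (R := ℂ) (∏ j ∈ range m, (B ^ j * A ^ (m - 1 - j)) ^ w j) *
        rescale ((∑ j ∈ range m, j * w j : ℕ) : ℂ) E := by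
    have h1 : ∀ j ∈ range m,
        (PowerSeries.C (R := ℂ) (B ^ j * A ^ (m - 1 - j)) * rescale (j : ℂ) E) ^ w j
          = PowerSeries.C (R := ℂ) ((B ^ j * A ^ (m - 1 - j)) ^ w j) * E ^ (j * w j) := by
      intro j _
      rw [← exp_pow, mul_pow, ← map_pow, pow_mul]
    rw [Finset.prod_congr rfl h1, Finset.prod_mul_distrib, Finset.prod_pow_eq_pow_sum,
      map_prod, exp_pow]
  rw [this, map_mul, map_natCast]
  ring

lemma coeff_one_exp : (PowerSeries.coeff (R := ℂ) 1) E = 1 := by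
  simp [PowerSeries.coeff_exp]

lemma rescale_C' (r c : ℂ) : rescale r (PowerSeries.C (R := ℂ) c) = PowerSeries.C (R := ℂ) c := by
  ext n; simp only [coeff_rescale, PowerSeries.coeff_C]
  split <;> simp_all

lemma rescale_X' (r : ℂ) : rescale r (PowerSeries.X : PowerSeries ℂ) =
    PowerSeries.C (R := ℂ) r * PowerSeries.X := by
  ext n
  simp only [coeff_rescale, PowerSeries.coeff_X, PowerSeries.coeff_C_mul]
  split <;> simp_all

lemma core (A B c : ℂ) (hB : B ≠ 0) (m k v : ℕ) (hm : 1 ≤ m) (x : ℂ)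
    (F : PowerSeries ℂ) (G : ℂ → PowerSeries ℂ)
    (hF : (PowerSeries.C (R := ℂ) B * E - PowerSeries.C (R := ℂ) A) ^ v * F
      = (PowerSeries.C (R := ℂ) c * PowerSeries.X ^ k) ^ v * rescale ((m : ℂ) * x) E)
    (hG : ∀ q : ℂ, (PowerSeries.C (R := ℂ) (B ^ m) * E - PowerSeries.C (R := ℂ) (A ^ m)) ^ v * G q
      = (PowerSeries.C (R := ℂ) c * PowerSeries.X ^ k) ^ v * rescale q E) :
    PowerSeries.C (R := ℂ) ((m : ℂ) ^ (k * v)) * F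
      = ∑ w ∈ piAntidiag (range m) v,
          PowerSeries.C (R := ℂ) ((Nat.multinomial (range m) w : ℂ) *
            ∏ j ∈ range m, (B ^ j * A ^ (m - 1 - j)) ^ w j) *
          rescale (m : ℂ) (G (x + ((∑ j ∈ range m, j * w j : ℕ) : ℂ) / (m : ℂ))) := by
  have hm0 : (m : ℂ) ≠ 0 := Nat.cast_ne_zero.mpr (by omega)
  set D : PowerSeries ℂ := PowerSeries.C (R := ℂ) B * E - PowerSeries.C (R := ℂ) A with hD
  set P : PowerSeries ℂ :=
    ∑ j ∈ range m, PowerSeries.C (R := ℂ) (B ^ j * A ^ (m - 1 - j)) * rescale (j : ℂ) E with hP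
  set Dm : PowerSeries ℂ :=
    PowerSeries.C (R := ℂ) B ^ m * rescale (m : ℂ) E - PowerSeries.C (R := ℂ) A ^ m with hDmdef
  have hDm : Dm = D * P := by
    rw [hDmdef, ← map_pow, ← map_pow]; exact geom_fact A B m
  -- Dm ≠ 0
  have hDmne : Dm ≠ 0 := by
    intro h
    have h1 := congrArg (PowerSeries.coeff (R := ℂ) 1) h
    rw [hDmdef, ← map_pow, ← map_pow, map_sub, PowerSeries.coeff_C_mul, coeff_rescale,
      coeff_one_exp, PowerSeries.coeff_C] at h1
    simp only [pow_one, mul_one, if_neg one_ne_zero, sub_zero, map_zero] at h1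
    rcases mul_eq_zero.mp h1 with h2 | h2
    · exact hB (pow_eq_zero_iff (Nat.one_le_iff_ne_zero.mp hm) |>.mp h2)
    · exact hm0 h2
  -- rescaled hG
  have hGm : ∀ q : ℂ, Dm ^ v * rescale (m : ℂ) (G q)
      = PowerSeries.C (R := ℂ) c ^ v * PowerSeries.C (R := ℂ) (m : ℂ) ^ (k * v) *
          PowerSeries.X ^ (k * v) * rescale ((m : ℂ) * q) E := by
    intro q
    have h := congrArg (rescale (m : ℂ)) (hG q)
    simp only [map_mul, map_pow, map_sub, rescale_C', rescale_X', rescale_rescale] at h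
    rw [mul_comm q (m : ℂ)] at h
    calc Dm ^ v * rescale (m : ℂ) (G q)
        = (PowerSeries.C (R := ℂ) c * (PowerSeries.C (R := ℂ) (m : ℂ) * PowerSeries.X) ^ k) ^ v *
          rescale ((m : ℂ) * q) E := h
      _ = _ := by
          simp only [mul_pow, ← pow_mul]
          ring
  -- the key identity
  have key : Dm ^ v * (PowerSeries.C (R := ℂ) ((m : ℂ) ^ (k * v)) * F)
      = Dm ^ v * (∑ w ∈ piAntidiag (range m) v,
          PowerSeries.C (R := ℂ) ((Nat.multinomial (range m) w : ℂ) *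
            ∏ j ∈ range m, (B ^ j * A ^ (m - 1 - j)) ^ w j) *
          rescale (m : ℂ) (G (x + ((∑ j ∈ range m, j * w j : ℕ) : ℂ) / (m : ℂ)))) := by
    rw [Finset.mul_sum]
    have hRHS : ∀ w ∈ piAntidiag (range m) v,
        Dm ^ v * (PowerSeries.C (R := ℂ) ((Nat.multinomial (range m) w : ℂ) *
            ∏ j ∈ range m, (B ^ j * A ^ (m - 1 - j)) ^ w j) *
          rescale (m : ℂ) (G (x + ((∑ j ∈ range m, j * w j : ℕ) : ℂ) / (m : ℂ))))
        = PowerSeries.C (R := ℂ) ((Nat.multinomial (range m) w : ℂ) *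
            ∏ j ∈ range m, (B ^ j * A ^ (m - 1 - j)) ^ w j) *
          (PowerSeries.C (R := ℂ) c ^ v * PowerSeries.C (R := ℂ) (m : ℂ) ^ (k * v) *
            PowerSeries.X ^ (k * v) *
            (rescale ((m : ℂ) * x) E *
              rescale (((∑ j ∈ range m, j * w j : ℕ) : ℂ)) E)) := by
      intro w hw
      rw [mul_left_comm, hGm, PowerSeries.exp_mul_exp_eq_exp_add, mul_add,
        mul_div_cancel₀ _ hm0]
    rw [Finset.sum_congr rfl hRHS]
    calc Dm ^ v * (PowerSeries.C (R := ℂ) ((m : ℂ) ^ (k * v)) * F)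
        = PowerSeries.C (R := ℂ) ((m : ℂ) ^ (k * v)) * P ^ v * (D ^ v * F) := by
          rw [hDm, mul_pow]; ring
      _ = PowerSeries.C (R := ℂ) ((m : ℂ) ^ (k * v)) * P ^ v *
            ((PowerSeries.C (R := ℂ) c * PowerSeries.X ^ k) ^ v * rescale ((m : ℂ) * x) E) := by
          rw [hF]
      _ = _ := by
          rw [hP, P_pow, Finset.mul_sum, Finset.sum_mul]
          refine Finset.sum_congr rfl fun w hw => ?_
          simp only [map_mul, map_pow, mul_pow, ← pow_mul]
          ring
  exact mul_left_cancel₀ (pow_ne_zero v hDmne) key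

/-- extend a tuple `u : Fin m' → ℕ` to `ℕ → ℕ` with value `v - ∑ u` at `0`,
`u (j-1)` at `j ∈ [1, m']`, and `0` beyond. -/
def wfun (m' v : ℕ) (u : Fin m' → ℕ) : ℕ → ℕ := fun j =>
  if j = 0 then v - ∑ i, u i else if h : j - 1 < m' then u ⟨j - 1, h⟩ else 0

lemma wfun_zero (m' v : ℕ) (u : Fin m' → ℕ) : wfun m' v u 0 = v - ∑ i, u i := rfl

lemma wfun_succ (m' v : ℕ) (u : Fin m' → ℕ) (i : Fin m') :
    wfun m' v u (i.val + 1) = u i := by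
  simp only [wfun, if_neg (Nat.succ_ne_zero _), Nat.add_sub_cancel, dif_pos i.isLt]

lemma wfun_ge (m' v : ℕ) (u : Fin m' → ℕ) (j : ℕ) (h : m' + 1 ≤ j) :
    wfun m' v u j = 0 := by
  rw [wfun, if_neg (by omega), dif_neg (by omega)]

lemma wfun_prod {M : Type*} [CommMonoid M] (m' v : ℕ) (u : Fin m' → ℕ) (F : ℕ → ℕ → M) :
    ∏ j ∈ range (m' + 1), F j (wfun m' v u j)
      = (∏ i : Fin m', F (i.val + 1) (u i)) * F 0 (v - ∑ i, u i) := by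
  rw [Finset.prod_range_succ', ← Fin.prod_univ_eq_prod_range
    (fun j => F (j + 1) (wfun m' v u (j + 1))) m', wfun_zero]
  congr 1
  exact Finset.prod_congr rfl fun i _ => by rw [wfun_succ]

lemma wfun_sum (m' v : ℕ) (u : Fin m' → ℕ) (F : ℕ → ℕ → ℕ) :
    ∑ j ∈ range (m' + 1), F j (wfun m' v u j)
      = (∑ i : Fin m', F (i.val + 1) (u i)) + F 0 (v - ∑ i, u i) := by
  rw [Finset.sum_range_succ', ← Fin.sum_univ_eq_sum_range
    (fun j => F (j + 1) (wfun m' v u (j + 1))) m', wfun_zero]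
  congr 1
  exact Finset.sum_congr rfl fun i _ => by rw [wfun_succ]

lemma wfun_total (m' v : ℕ) (u : Fin m' → ℕ) (hS : ∑ i, u i ≤ v) :
    ∑ j ∈ range (m' + 1), wfun m' v u j = v := by
  have := wfun_sum m' v u (fun _ n => n)
  beta_reduce at this
  rw [this]
  omega

lemma multinomial_cast (s : Finset ℕ) (f : ℕ → ℕ) :
    (Nat.multinomial s f : ℂ) = ((∑ i ∈ s, f i).factorial : ℂ) /
      ((∏ i ∈ s, (f i).factorial : ℕ) : ℂ) := by
  have hne : ((∏ i ∈ s, (f i).factorial : ℕ) : ℂ) ≠ 0 := by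
    exact_mod_cast (Finset.prod_pos (fun i _ => Nat.factorial_pos _)).ne'
  rw [eq_div_iff hne, mul_comm, ← Nat.cast_mul, Nat.multinomial_spec]

lemma reindex (A B : ℂ) (hA : A ≠ 0) (m v : ℕ) (hm : 1 ≤ m) (e : ℕ → ℂ) :
    A ^ (v * (m - 1)) *
      ∑ u ∈ (Fintype.piFinset fun _ : Fin (m - 1) => Finset.range (v + 1)).filter
          (fun u => ∑ i, u i ≤ v),
        (v.factorial : ℂ) /
            ((((∏ i, (u i).factorial) * (v - ∑ i, u i).factorial : ℕ)) : ℂ) *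
          (B / A) ^ (∑ i, (i.val + 1) * u i) * e (∑ i, (i.val + 1) * u i)
    = ∑ w ∈ piAntidiag (range m) v,
        (Nat.multinomial (range m) w : ℂ) *
          (∏ j ∈ range m, (B ^ j * A ^ (m - 1 - j)) ^ w j) *
          e (∑ j ∈ range m, j * w j) := by
  obtain ⟨m', rfl⟩ : ∃ m', m = m' + 1 := ⟨m - 1, by omega⟩
  simp only [Nat.add_sub_cancel]
  rw [Finset.mul_sum]
  refine Finset.sum_nbij' (fun u => wfun m' v u)
    (fun w => fun i : Fin m' => w (i.val + 1)) ?_ ?_ ?_ ?_ ?_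
  · intro u hu
    simp only [mem_filter, Fintype.mem_piFinset, mem_range] at hu
    rw [mem_piAntidiag]
    refine ⟨wfun_total m' v u hu.2, fun j hj => mem_range.mpr ?_⟩
    by_contra h
    exact hj (wfun_ge m' v u j (by omega))
  · intro w hw
    rw [mem_piAntidiag] at hw
    obtain ⟨hsum, hsupp⟩ := hw
    simp only [mem_filter, Fintype.mem_piFinset, mem_range]
    have hsum' : (∑ i : Fin m', w (i.val + 1)) + w 0 = v := by
      rw [Fin.sum_univ_eq_sum_range (fun j => w (j + 1)) m', ← Finset.sum_range_succ']
      exact hsum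
    constructor
    · intro i
      have h2 : w (i.val + 1) ≤ ∑ i : Fin m', w (i.val + 1) :=
        Finset.single_le_sum (f := fun i : Fin m' => w (i.val + 1))
          (fun _ _ => Nat.zero_le _) (mem_univ i)
      omega
    · show (∑ i : Fin m', w (i.val + 1)) ≤ v
      omega
  · intro u hu
    funext i
    exact wfun_succ m' v u i
  · intro w hw
    rw [mem_piAntidiag] at hw
    obtain ⟨hsum, hsupp⟩ := hw
    have hsum' : (∑ i : Fin m', w (i.val + 1)) + w 0 = v := by
      rw [Fin.sum_univ_eq_sum_range (fun j => w (j + 1)) m', ← Finset.sum_range_succ']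
      exact hsum
    funext j
    rcases Nat.eq_zero_or_pos j with rfl | hj
    · show wfun m' v (fun i : Fin m' => w (i.val + 1)) 0 = w 0
      rw [wfun_zero]
      omega
    · have hj0 : j ≠ 0 := by omega
      rcases Nat.lt_or_ge (j - 1) m' with h | h
      · show wfun m' v (fun i : Fin m' => w (i.val + 1)) j = w j
        rw [wfun, if_neg hj0, dif_pos h]
        show w ((j - 1) + 1) = w j
        congr 1
        omega
      · show wfun m' v (fun i : Fin m' => w (i.val + 1)) j = w j
        rw [wfun, if_neg hj0, dif_neg (not_lt.mpr h)]
        by_contra hne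
        have := mem_range.mp (hsupp j fun hh => hne hh.symm)
        omega
  · intro u hu
    simp only [mem_filter, Fintype.mem_piFinset, mem_range] at hu
    obtain ⟨hbd, hS0⟩ := hu
    show A ^ (v * m') *
        ((v.factorial : ℂ) /
            ((((∏ i : Fin m', (u i).factorial) * (v - ∑ i : Fin m', u i).factorial : ℕ)) : ℂ) *
          (B / A) ^ (∑ i : Fin m', (i.val + 1) * u i) *
          e (∑ i : Fin m', (i.val + 1) * u i))
      = (Nat.multinomial (range (m' + 1)) (wfun m' v u) : ℂ) *
          (∏ j ∈ range (m' + 1), (B ^ j * A ^ (m' - j)) ^ wfun m' v u j) *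
          e (∑ j ∈ range (m' + 1), j * wfun m' v u j)
    set S : ℕ := ∑ i : Fin m', u i with hSdef
    set J : ℕ := ∑ i : Fin m', (i.val + 1) * u i with hJdef
    have hS : S ≤ v := hS0
    -- sum identity
    have s1 : ∑ j ∈ range (m' + 1), j * wfun m' v u j = J := by
      have := wfun_sum m' v u (fun j n => j * n)
      simp only [zero_mul, add_zero] at this
      rw [this]
    -- exponent bookkeeping
    have hsplit : ∀ i : Fin m', (m' - (i.val + 1)) * u i + (i.val + 1) * u i = m' * u i := by
      intro i
      have : i.val + 1 ≤ m' := i.isLt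
      rw [← add_mul]
      congr 1
      omega
    have haJ : (∑ i : Fin m', (m' - (i.val + 1)) * u i) + J = m' * S := by
      rw [hJdef, hSdef, ← Finset.sum_add_distrib, Finset.mul_sum]
      exact Finset.sum_congr rfl fun i _ => hsplit i
    have hJle : J ≤ m' * v := by
      have h1 : J ≤ m' * S := by rw [← haJ]; omega
      exact h1.trans (Nat.mul_le_mul_left m' hS)
    -- product identity
    have s2 : ∏ j ∈ range (m' + 1), (B ^ j * A ^ (m' - j)) ^ wfun m' v u j
        = B ^ J * A ^ (m' * v - J) := by
      rw [wfun_prod m' v u (fun j n => (B ^ j * A ^ (m' - j)) ^ n)]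
      have hterm : ∀ i : Fin m', (B ^ (i.val + 1) * A ^ (m' - (i.val + 1))) ^ u i
          = B ^ ((i.val + 1) * u i) * A ^ ((m' - (i.val + 1)) * u i) := by
        intro i
        rw [mul_pow, ← pow_mul, ← pow_mul]
      rw [Finset.prod_congr rfl fun i _ => hterm i, Finset.prod_mul_distrib,
        Finset.prod_pow_eq_pow_sum, Finset.prod_pow_eq_pow_sum]
      have h0 : (B ^ 0 * A ^ (m' - 0)) ^ (v - S) = A ^ (m' * (v - S)) := by
        rw [pow_zero, one_mul, ← pow_mul]
        norm_num
      have hAe : (∑ i : Fin m', (m' - (i.val + 1)) * u i) + m' * (v - S) = m' * v - J := by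
        zify [hS, hJle]
        zify at haJ
        linear_combination haJ
      rw [h0, ← hJdef, mul_assoc, ← pow_add, hAe]
    -- multinomial identity
    have s3 : (Nat.multinomial (range (m' + 1)) (wfun m' v u) : ℂ)
        = (v.factorial : ℂ) /
          ((((∏ i : Fin m', (u i).factorial) * (v - S).factorial : ℕ)) : ℂ) := by
      rw [multinomial_cast, wfun_total m' v u hS]
      congr 2
      rw [wfun_prod m' v u (fun _ n => n.factorial)]
    -- A-power manipulation
    have s4 : A ^ (m' * v) * (B / A) ^ J = B ^ J * A ^ (m' * v - J) := by
      rw [div_pow, eq_comm, mul_comm (B ^ J)]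
      field_simp
      rw [mul_right_comm, ← pow_add, Nat.sub_add_cancel hJle]
      ring
    rw [s1, s2, s3, ← s4, Nat.mul_comm v m']
    ring

end Aux

/-- Raabe-type multiplication formula for the higher-order unified Apostol-type polynomials:
`Y_{n,β}^{(v)}(mx) = m^{n−kv} a^{bv(m−1)} ∑_{u₁,…,u_{m−1}≥0, u₁+⋯+u_{m−1}≤v}
  (v!/(u₁!⋯u_{m−1}!(v−u₁−⋯−u_{m−1})!)) (β^b/a^b)^j Ỹ_n^{(v)}(x + j/m)`,
where `j = u₁ + 2u₂ + ⋯ + (m−1)u_{m−1}` and `Ỹ` is the family for the parameters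
`((β^b)^m, (a^b)^m)`. -/
theorem apostol_multiplication_higher (k v : ℕ) (a b : ℝ) (β : ℂ)
    (ha : 0 < a) (hb : 0 < b) (hβ : β ≠ 0)
    (m : ℕ) (hm : 1 ≤ m) (hv : 1 ≤ v)
    (Y Yt : ℕ → Polynomial ℂ)
    (hY : ApostolFamily k v a b β Y)
    (hYt : ApostolFamilyC k v ((β ^ (b : ℂ)) ^ m) ((((a ^ b : ℝ) : ℂ)) ^ m) Yt)
    (n : ℕ) (x : ℝ) :
    (Y n).eval ((m : ℂ) * (x : ℂ))
      = (m : ℂ) ^ n / (m : ℂ) ^ (k * v) * ((a ^ b : ℝ) : ℂ) ^ (v * (m - 1)) *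
          ∑ u ∈ (Fintype.piFinset fun _ : Fin (m - 1) => Finset.range (v + 1)).filter
              (fun u => ∑ i, u i ≤ v),
            (v.factorial : ℂ) /
                ((((∏ i, (u i).factorial) * (v - ∑ i, u i).factorial : ℕ)) : ℂ) *
              (β ^ (b : ℂ) / ((a ^ b : ℝ) : ℂ)) ^ (∑ i, (i.val + 1) * u i) *
              (Yt n).eval ((x : ℂ) + ((∑ i, (i.val + 1) * u i : ℕ) : ℂ) / (m : ℂ)) := by
  classical
  set A : ℂ := (((a ^ b : ℝ) : ℂ)) with hAdef
  set B : ℂ := β ^ (b : ℂ) with hBdef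
  set c : ℂ := (2 : ℂ) ^ ((1 : ℤ) - (k : ℤ)) with hcdef
  have hA : A ≠ 0 := by
    rw [hAdef]
    exact_mod_cast (Real.rpow_pos_of_pos ha b).ne'
  have hB : B ≠ 0 := by
    rw [hBdef]
    intro h
    exact hβ (Complex.cpow_eq_zero_iff β (b : ℂ) |>.mp h).1
  have hm0 : (m : ℂ) ≠ 0 := Nat.cast_ne_zero.mpr (by omega)
  have hfac : ((n.factorial : ℂ)) ≠ 0 := Nat.cast_ne_zero.mpr n.factorial_ne_zero
  have hY' : ApostolFamilyC k v B A Y := hY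
  -- the two evaluated generating-function identities
  have hF := eval_family hY' ((m : ℂ) * (x : ℂ))
  have hG := fun q : ℂ => eval_family hYt q
  -- the key series identity
  have hcore := core A B c hB m k v hm (x : ℂ)
    (PowerSeries.mk fun N => (N.factorial : ℂ)⁻¹ * (Y N).eval ((m : ℂ) * (x : ℂ)))
    (fun q => PowerSeries.mk fun N => (N.factorial : ℂ)⁻¹ * (Yt N).eval q)
    hF hG
  -- extract coefficient n
  have hco := congrArg (PowerSeries.coeff (R := ℂ) n) hcore
  beta_reduce at hco
  rw [PowerSeries.coeff_C_mul, PowerSeries.coeff_mk, map_sum] at hco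
  have hterm : ∀ w ∈ (Finset.range m).piAntidiag v,
      (PowerSeries.coeff (R := ℂ) n)
        (PowerSeries.C (R := ℂ) ((Nat.multinomial (Finset.range m) w : ℂ) *
            ∏ j ∈ Finset.range m, (B ^ j * A ^ (m - 1 - j)) ^ w j) *
          PowerSeries.rescale (m : ℂ)
            (PowerSeries.mk fun N => (N.factorial : ℂ)⁻¹ *
              (Yt N).eval ((x : ℂ) + ((∑ j ∈ Finset.range m, j * w j : ℕ) : ℂ) / (m : ℂ))))
      = ((Nat.multinomial (Finset.range m) w : ℂ) *
            ∏ j ∈ Finset.range m, (B ^ j * A ^ (m - 1 - j)) ^ w j) *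
          ((m : ℂ) ^ n * ((n.factorial : ℂ)⁻¹ *
            (Yt n).eval ((x : ℂ) + ((∑ j ∈ Finset.range m, j * w j : ℕ) : ℂ) / (m : ℂ)))) := by
    intro w hw
    rw [PowerSeries.coeff_C_mul, PowerSeries.coeff_rescale, PowerSeries.coeff_mk]
  rw [Finset.sum_congr rfl hterm] at hco
  -- reindex the target sum
  have hre := reindex A B hA m v hm
    (fun q : ℕ => (Yt n).eval ((x : ℂ) + (q : ℂ) / (m : ℂ)))
  beta_reduce at hre
  rw [mul_assoc, hre]
  -- final scalar computation
  rw [div_mul_eq_mul_div, eq_div_iff (pow_ne_zero _ hm0)]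
  have hsum : ∑ w ∈ (Finset.range m).piAntidiag v,
      ((Nat.multinomial (Finset.range m) w : ℂ) *
          ∏ j ∈ Finset.range m, (B ^ j * A ^ (m - 1 - j)) ^ w j) *
        ((m : ℂ) ^ n * ((n.factorial : ℂ)⁻¹ *
          (Yt n).eval ((x : ℂ) + ((∑ j ∈ Finset.range m, j * w j : ℕ) : ℂ) / (m : ℂ))))
      = (m : ℂ) ^ n * (n.factorial : ℂ)⁻¹ *
        ∑ w ∈ (Finset.range m).piAntidiag v,
          (Nat.multinomial (Finset.range m) w : ℂ) *
            (∏ j ∈ Finset.range m, (B ^ j * A ^ (m - 1 - j)) ^ w j) *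
            (Yt n).eval ((x : ℂ) + ((∑ j ∈ Finset.range m, j * w j : ℕ) : ℂ) / (m : ℂ)) := by
    rw [Finset.mul_sum]
    exact Finset.sum_congr rfl fun w _ => by ring
  rw [hsum] at hco
  have h2 := congrArg (fun z => (n.factorial : ℂ) * z) hco
  beta_reduce at h2
  have h3 : ((n.factorial : ℂ)) * ((m : ℂ) ^ (k * v) *
      ((n.factorial : ℂ)⁻¹ * (Y n).eval ((m : ℂ) * (x : ℂ))))
      = (Y n).eval ((m : ℂ) * (x : ℂ)) * (m : ℂ) ^ (k * v) := by
    field_simp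
  have h4 : ((n.factorial : ℂ)) * ((m : ℂ) ^ n * (n.factorial : ℂ)⁻¹ *
      (∑ w ∈ (Finset.range m).piAntidiag v,
        (Nat.multinomial (Finset.range m) w : ℂ) *
          (∏ j ∈ Finset.range m, (B ^ j * A ^ (m - 1 - j)) ^ w j) *
          (Yt n).eval ((x : ℂ) + ((∑ j ∈ Finset.range m, j * w j : ℕ) : ℂ) / (m : ℂ))))
      = (m : ℂ) ^ n * (∑ w ∈ (Finset.range m).piAntidiag v,
        (Nat.multinomial (Finset.range m) w : ℂ) *
          (∏ j ∈ Finset.range m, (B ^ j * A ^ (m - 1 - j)) ^ w j) *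
          (Yt n).eval ((x : ℂ) + ((∑ j ∈ Finset.range m, j * w j : ℕ) : ℂ) / (m : ℂ))) := by
    rw [← mul_assoc, ← mul_assoc]
    congr 1
    field_simp
  rw [h3, h4] at h2
  exact h2
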